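/- The cubic polynomial u(x) = 144π³ − 15π⁵ + (432π² − 42π⁴)x + (96π³ − 432π − 4π⁵)x² + (8π⁴ − 96π² + 288)x³ is strictly positive for all x in (0.373, π/2). -/

import Mathlib

open Real

theorem stmt6 (x : ℝ) (h0 : 0.373 < x) (h1 : x < π / 2) :
    0 < 144 * π ^ 3 - 15 * π ^ 5 + (432 * π ^ 2 - 42 * π ^ 4) * x +
      (96 * π ^ 3 - 432 * π - 4 * π ^ 5) * x ^ 2 +
      (8 * π ^ 4 - 96 * π ^ 2 + 288) * x ^ 3 := by
  have hp1 : (3.141592 : ℝ) < π := pi_gt_d6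
  have hp2 : π < 3.141593 := pi_lt_d6
  have hpp : (0:ℝ) < π := pi_pos
  have hs2l : (9.8696 : ℝ) < π ^ 2 := by nlinarith
  have hs2u : π ^ 2 < 9.8696066 := by nlinarith
  have hs3l : (31.006257 : ℝ) < π ^ 3 := by nlinarith
  have hs3u : π ^ 3 < 31.006287 := by nlinarith
  have hs4l : (97.409009 : ℝ) < π ^ 4 := by nlinarith
  have hs4u : π ^ 4 < 97.409134 := by nlinarith
  have hs5l : (306.019366 : ℝ) < π ^ 5 := by nlinarith
  have hs5u : π ^ 5 < 306.0198536 := by nlinarith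
  have hc1 : (0:ℝ) < 432 * π ^ 2 - 42 * π ^ 4 := by linarith
  have hc2 : (0:ℝ) < 96 * π ^ 3 - 432 * π - 4 * π ^ 5 := by linarith
  have hc3 : (0:ℝ) < 8 * π ^ 4 - 96 * π ^ 2 + 288 := by linarith
  have hu : (0:ℝ) < 144 * π ^ 3 - 15 * π ^ 5 + (432 * π ^ 2 - 42 * π ^ 4) * 0.373 +
      (96 * π ^ 3 - 432 * π - 4 * π ^ 5) * 0.373 ^ 2 +
      (8 * π ^ 4 - 96 * π ^ 2 + 288) * 0.373 ^ 3 := by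
    linarith
  have hx : (0:ℝ) < x := lt_trans (by norm_num) h0
  have hd1 : (0:ℝ) < x - 0.373 := by linarith
  have hd2 : (0:ℝ) < x ^ 2 - 0.373 ^ 2 := by nlinarith
  have hd3 : (0:ℝ) < x ^ 3 - 0.373 ^ 3 := by nlinarith
  linarith [mul_pos hc1 hd1, mul_pos hc2 hd2, mul_pos hc3 hd3, hu]
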